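/- Let k be a field and (A, 𝔪) a local k-algebra whose residue field K = A/𝔪 is an algebraic and separable extension of k. Let Ã = K ⊗_k A and let M̃ be the kernel of the evaluation map Ã → K, λ⊗a ↦ λ·a(x). Then the K-linear map ϑ : 𝔪/𝔪² → M̃/M̃² induced by a ↦ 1⊗a is bijective. -/

import Mathlib

open IsLocalRing TensorProduct

section LocalAlgebra

variable (k A : Type*) [Field k] [CommRing A] [IsLocalRing A] [Algebra k A]

instance : IsScalarTower k A (ResidueField A) :=
  IsScalarTower.of_algebraMap_eq fun x =>
    (IsLocalRing.ResidueField.map_residue (algebraMap k A) x).symm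

/-- The evaluation map `Ã = K ⊗_k A → K`, `λ ⊗ a ↦ λ·a(x)`. -/
noncomputable def ev : (ResidueField A ⊗[k] A) →ₐ[ResidueField A] ResidueField A :=
  Algebra.TensorProduct.lift (AlgHom.id _ _) (IsScalarTower.toAlgHom k A (ResidueField A))
    fun _ _ => Commute.all _ _

/-- The ideal `M̃ = ker(ev) ⊆ Ã`. -/
noncomputable def Mker : Ideal (ResidueField A ⊗[k] A) := RingHom.ker (ev k A)

/-- For `m ∈ 𝔪`, the element `1 ⊗ m` of `M̃`. -/
noncomputable def oneTmul (m : maximalIdeal A) : Mker k A :=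
  ⟨(1 : ResidueField A) ⊗ₜ[k] (m : A), by
    simp only [Mker, RingHom.mem_ker, ev, Algebra.TensorProduct.lift_tmul, map_one, one_mul,
      AlgHom.coe_id, id_eq, IsScalarTower.coe_toAlgHom', ResidueField.algebraMap_eq]
    exact Ideal.Quotient.eq_zero_iff_mem.mpr m.2⟩

/-- For `a : A`, the element `1 ⊗ a − a(x) ⊗ 1` of `M̃`. -/
noncomputable def gen (a : A) : Mker k A :=
  ⟨(1 : ResidueField A) ⊗ₜ[k] a - residue A a ⊗ₜ[k] (1 : A), by
    simp [Mker, RingHom.mem_ker, ev, Algebra.TensorProduct.lift_tmul]⟩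

end LocalAlgebra

section Aux

variable (k A : Type*) [Field k] [CommRing A] [IsLocalRing A] [Algebra k A]

/-- The map `q : K ⊗[k] A → K ⊗[k] K`. -/
noncomputable def qmap : (ResidueField A ⊗[k] A) →ₐ[k] (ResidueField A ⊗[k] ResidueField A) :=
  Algebra.TensorProduct.map (AlgHom.id k _) (IsScalarTower.toAlgHom k A _)

lemma ev_tmul (lam : ResidueField A) (a : A) :
    ev k A (lam ⊗ₜ[k] a) = lam * residue A a := by
  simp [ev, Algebra.TensorProduct.lift_tmul]

lemma lmul'_qmap (x : ResidueField A ⊗[k] A) :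
    Algebra.TensorProduct.lmul' k (qmap k A x) = ev k A x := by
  induction x with
  | zero => simp
  | tmul lam a => simp [qmap, ev_tmul]
  | add x y hx hy => simp [hx, hy]

lemma qmap_surjective : Function.Surjective (qmap k A) := by
  intro y
  induction y with
  | zero => exact ⟨0, map_zero _⟩
  | tmul lam mu =>
    obtain ⟨a, rfl⟩ := residue_surjective (R := A) mu
    exact ⟨lam ⊗ₜ[k] a, by simp [qmap]⟩
  | add x y hx hy =>
    obtain ⟨u, hu⟩ := hx; obtain ⟨v, hv⟩ := hy
    exact ⟨u + v, by simp [hu, hv]⟩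

lemma Mker_eq_comap :
    Mker k A = (KaehlerDifferential.ideal k (ResidueField A)).comap (qmap k A) := by
  ext x
  rw [Ideal.mem_comap]
  show ev k A x = 0 ↔ _ ∈ RingHom.ker _
  rw [RingHom.mem_ker, ← lmul'_qmap]

lemma ker_qmap_le : RingHom.ker (qmap k A) ≤ Mker k A := by
  intro x hx
  rw [RingHom.mem_ker] at hx
  show x ∈ (Mker k A : Ideal _)
  rw [Mker_eq_comap, Ideal.mem_comap, hx]
  exact Ideal.zero_mem _

end Aux

section AuxSep

variable (k A : Type*) [Field k] [CommRing A] [IsLocalRing A] [Algebra k A]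

lemma m2_le : maximalIdeal A ^ 2 ≤ maximalIdeal A := Ideal.pow_le_self two_ne_zero

/-- The projection `A ⧸ 𝔪² → K`. -/
noncomputable def rho0 : (A ⧸ (maximalIdeal A ^ 2)) →+* ResidueField A :=
  Ideal.Quotient.lift _ (residue A)
    (fun a ha => Ideal.Quotient.eq_zero_iff_mem.mpr (m2_le A ha))

lemma rho0_mk (a : A) :
    rho0 A (Ideal.Quotient.mk (maximalIdeal A ^ 2) a) = residue A a :=
  Ideal.Quotient.lift_mk _ _ _

lemma algebraMap_resField (c : k) :
    algebraMap k (ResidueField A) c = residue A (algebraMap k A c) := by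
  rw [IsScalarTower.algebraMap_apply k A (ResidueField A) c, ResidueField.algebraMap_eq]

set_option maxHeartbeats 1000000 in
/-- There is a `k`-algebra section of `A ⧸ 𝔪² → K` when `K/k` is separable. -/
lemma exists_section [Algebra.IsSeparable k (ResidueField A)] :
    ∃ σ : ResidueField A →ₐ[k] (A ⧸ (maximalIdeal A ^ 2)),
      ∀ x, rho0 A (σ x) = x := by
  classical
  -- We transport the problem to a common universe using `ULift`.
  let K := ResidueField A
  let B := A ⧸ (maximalIdeal A ^ 2)
  let k' := ULift.{max u_1 u_2} k
  let K' := ULift.{max u_1 u_2} K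
  let B' := ULift.{max u_1 u_2} B
  let uk : k' ≃+* k := ULift.ringEquiv
  let uK : K' ≃+* K := ULift.ringEquiv
  let uB : B' ≃+* B := ULift.ringEquiv
  letI : Algebra k' K' :=
    ((uK.symm.toRingHom.comp (algebraMap k K)).comp uk.toRingHom).toAlgebra
  letI : Algebra k' B' :=
    ((uB.symm.toRingHom.comp (algebraMap k B)).comp uk.toRingHom).toAlgebra
  have halgK : ∀ c : k', algebraMap k' K' c = uK.symm (algebraMap k K (uk c)) := fun _ => rfl
  have halgB : ∀ c : k', algebraMap k' B' c = uB.symm (algebraMap k B (uk c)) := fun _ => rfl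
  have hcompat : RingHom.comp (algebraMap k' K') uk.symm.toRingHom
      = RingHom.comp uK.symm.toRingHom (algebraMap k K) := by
    ext c
    rw [RingHom.comp_apply, RingHom.comp_apply,
      show uk.symm.toRingHom c = uk.symm c from rfl, halgK, uk.apply_symm_apply]
    rfl
  haveI : Algebra.IsSeparable k' K' :=
    Algebra.IsSeparable.of_equiv_equiv uk.symm uK.symm hcompat
  haveI := Algebra.FormallyEtale.of_isSeparable k' K'
  -- the square-zero ideal `J = 𝔪/𝔪² ⊆ B` and its `ULift` version
  let J : Ideal B := (maximalIdeal A).map (Ideal.Quotient.mk (maximalIdeal A ^ 2))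
  have hJsq : J ^ 2 = ⊥ := by rw [← Ideal.map_pow, Ideal.map_quotient_self]
  let J' : Ideal B' := J.map (uB.symm : B →+* B')
  have hJJ' : J = J'.map (uB : B' →+* B) := by
    simp only [J', Ideal.map_map]
    rw [show (uB : B' →+* B).comp (uB.symm : B →+* B') = RingHom.id B by
      ext b; exact uB.apply_symm_apply b, Ideal.map_id]
  have hJ' : IsNilpotent J' := by
    refine ⟨2, ?_⟩
    rw [← Ideal.map_pow, show J ^ 2 = ⊥ from hJsq, Ideal.map_bot]
    rfl
  -- the identification of `B' ⧸ J'` with `B ⧸ J`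
  let t : (B' ⧸ J') ≃+* B ⧸ J := Ideal.quotientEquiv J' J uB hJJ'
  have ht : ∀ b : B', t (Ideal.Quotient.mk J' b) = Ideal.Quotient.mk J (uB b) :=
    fun b => Ideal.quotientEquiv_mk J' J uB hJJ' b
  -- the identification of `B ⧸ J` with `K`
  let r : (B ⧸ J) ≃+* A ⧸ maximalIdeal A := DoubleQuot.quotQuotEquivQuotOfLE (m2_le A)
  have hr : ∀ b : B, r (Ideal.Quotient.mk J b) = rho0 A b := by
    intro b
    obtain ⟨a, rfl⟩ := Ideal.Quotient.mk_surjective (I := maximalIdeal A ^ 2) b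
    rw [rho0_mk]
    exact DoubleQuot.quotQuotEquivQuotOfLE_quotQuotMk a (m2_le A)
  have hrmk : ∀ a : A, r (Ideal.Quotient.mk J (Ideal.Quotient.mk (maximalIdeal A ^ 2) a))
      = residue A a := fun a => by rw [hr, rho0_mk]
  -- the map `g' : K' → B' ⧸ J'`
  let g' : K' →ₐ[k'] B' ⧸ J' :=
    { toRingHom :=
        ((t.symm : (B ⧸ J) →+* B' ⧸ J').comp ((r.symm : (A ⧸ maximalIdeal A) →+* B ⧸ J))).comp
          (uK : K' →+* K)
      commutes' := by
        intro c
        show t.symm (r.symm (uK (algebraMap k' K' c))) = Ideal.Quotient.mk J' (algebraMap k' B' c)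
        rw [halgK, uK.apply_symm_apply, halgB]
        have h3 : Ideal.Quotient.mk J (algebraMap k B (uk c))
            = r.symm (algebraMap k K (uk c)) := by
          apply r.injective
          erw [r.apply_symm_apply]
          rw [show algebraMap k B (uk c)
            = Ideal.Quotient.mk (maximalIdeal A ^ 2) (algebraMap k A (uk c)) from rfl]
          rw [hrmk, algebraMap_resField]
        apply t.injective
        rw [t.apply_symm_apply, ht, uB.apply_symm_apply]
        exact h3.symm }
  let σ' : K' →ₐ[k'] B' := Algebra.FormallySmooth.lift J' hJ' g'
  have hmk : ∀ x : K', Ideal.Quotient.mk J' (σ' x) = g' x :=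
    fun x => Algebra.FormallySmooth.mk_lift J' hJ' g' x
  have hσρ : ∀ x : K', rho0 A (uB (σ' x)) = uK x := by
    intro x
    rw [← hr, ← ht, hmk]
    show r (t (t.symm (r.symm (uK x)))) = uK x
    rw [t.apply_symm_apply]
    erw [r.apply_symm_apply]
  have hcommutes : ∀ c : k, uB (σ' (uK.symm (algebraMap k K c))) = algebraMap k B c := by
    intro c
    have h2 : uK.symm (algebraMap k K c) = algebraMap k' K' (uk.symm c) := by
      rw [halgK, uk.apply_symm_apply]
    rw [h2, σ'.commutes, halgB, uB.apply_symm_apply, uk.apply_symm_apply]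
  let σfin : K →ₐ[k] B :=
    { toRingHom := RingHom.comp (uB : B' →+* B)
        (RingHom.comp (σ' : K' →+* B') (uK.symm : K →+* K'))
      commutes' := hcommutes }
  exact ⟨σfin, fun x => (by simpa using hσρ (uK.symm x) : rho0 A (uB (σ' (uK.symm x))) = x)⟩

end AuxSep

section Kaehler

open Polynomial

/-- For a separable field extension `K/k`, the kernel `I` of `K ⊗[k] K → K` satisfies
`I ≤ I²` (hence `I = I²`). -/
lemma kaehler_gen_mem (k K : Type*) [Field k] [Field K] [Algebra k K]
    [Algebra.IsSeparable k K] (α : K) :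
    (1 : K) ⊗ₜ[k] α - α ⊗ₜ[k] (1 : K) ∈ (KaehlerDifferential.ideal k K) ^ 2 := by
  set I := KaehlerDifferential.ideal k K with hI
  set β : K ⊗[k] K := (1 : K) ⊗ₜ[k] α - α ⊗ₜ[k] (1 : K) with hβdef
  have hβI : β ∈ I := KaehlerDifferential.one_smul_sub_smul_one_mem_ideal k α
  set p := minpoly k α with hp
  have hsep : p.Separable := Algebra.IsSeparable.isSeparable k α
  have hα : aeval α p = 0 := minpoly.aeval k α
  set f := p.map (algebraMap k (K ⊗[k] K)) with hf
  have hev : ∀ (q : k[X]) (x : K ⊗[k] K), (q.map (algebraMap k (K ⊗[k] K))).eval x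
      = aeval x q := fun q x => by rw [Polynomial.eval_map, ← Polynomial.aeval_def]
  have hleft : ∀ q : k[X], aeval (α ⊗ₜ[k] (1:K)) q = (aeval α q) ⊗ₜ[k] (1:K) := by
    intro q
    exact aeval_algHom_apply (Algebra.TensorProduct.includeLeft (R := k) (A := K) (B := K)
      (S := k)) α q
  have hright : aeval ((1:K) ⊗ₜ[k] α) p = 0 := by
    have := aeval_algHom_apply (Algebra.TensorProduct.includeRight (R := k) (A := K)
      (B := K)) α p
    rw [hα, map_zero] at this
    exact this
  obtain ⟨c, hc⟩ := f.binomExpansion (α ⊗ₜ[k] (1:K)) β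
  have h1 : (α ⊗ₜ[k] (1:K)) + β = (1:K) ⊗ₜ[k] α := by rw [hβdef]; ring
  rw [h1] at hc
  rw [hf, hev, hright] at hc
  rw [show f.derivative = (derivative p).map (algebraMap k (K ⊗[k] K)) from
    (derivative_map p _)] at hc
  rw [hev, hev, hleft, hleft, hα, TensorProduct.zero_tmul] at hc
  -- hc : 0 = 0 + (aeval α (derivative p)) ⊗ₜ 1 * β + c * β ^ 2
  have hne : aeval α (derivative p) ≠ 0 := hsep.aeval_derivative_ne_zero hα
  have hunit : IsUnit ((aeval α (derivative p)) ⊗ₜ[k] (1:K)) := by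
    have : IsUnit (aeval α (derivative p)) := isUnit_iff_ne_zero.mpr hne
    exact this.map (Algebra.TensorProduct.includeLeft (R := k) (A := K) (B := K) (S := k))
  have heq : (aeval α (derivative p)) ⊗ₜ[k] (1:K) * β = -(c * β ^ 2) := by
    refine eq_neg_of_add_eq_zero_left ?_
    rw [zero_add] at hc
    exact hc.symm
  have hβeq : β = ↑hunit.unit⁻¹ * ((aeval α (derivative p)) ⊗ₜ[k] (1:K) * β) := by
    conv_lhs => rw [← hunit.unit.inv_mul_cancel_left β]
    rw [hunit.unit_spec]
  rw [hβeq, heq]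
  refine Ideal.mul_mem_left _ _ (neg_mem (Ideal.mul_mem_left _ _ ?_))
  exact Ideal.pow_mem_pow hβI 2

/-- For a separable field extension `K/k`, the kernel `I` of `K ⊗[k] K → K` satisfies
`I ≤ I²` (hence `I = I²`). -/
lemma kaehler_ideal_idem (k K : Type*) [Field k] [Field K] [Algebra k K]
    [Algebra.IsSeparable k K] :
    KaehlerDifferential.ideal k K ≤ (KaehlerDifferential.ideal k K) ^ 2 := by
  conv_lhs => rw [← KaehlerDifferential.span_range_eq_ideal]
  rw [Ideal.span_le]
  rintro _ ⟨α, rfl⟩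
  exact kaehler_gen_mem k K α

end Kaehler

section Sup

variable (k A : Type*) [Field k] [CommRing A] [IsLocalRing A] [Algebra k A]

lemma map_qmap_ringHom (J : Ideal (ResidueField A ⊗[k] A)) :
    Ideal.map (qmap k A) J = Ideal.map (qmap k A).toRingHom J := rfl

lemma Mker_le_sq_sup [Algebra.IsSeparable k (ResidueField A)] :
    Mker k A ≤ (Mker k A) ^ 2 ⊔ RingHom.ker (qmap k A) := by
  intro x hx
  have hsurj : Function.Surjective (qmap k A).toRingHom := qmap_surjective k A
  have hmap : Ideal.map (qmap k A).toRingHom (Mker k A)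
      = KaehlerDifferential.ideal k (ResidueField A) := by
    rw [← map_qmap_ringHom, Mker_eq_comap]
    exact Ideal.map_comap_of_surjective (qmap k A).toRingHom hsurj _
  have h1 : qmap k A x ∈ (KaehlerDifferential.ideal k (ResidueField A)) ^ 2 := by
    apply kaehler_ideal_idem
    rw [Mker_eq_comap] at hx
    exact hx
  rw [← hmap, ← Ideal.map_pow] at h1
  have h2 : x ∈ Ideal.comap (qmap k A).toRingHom
      (Ideal.map (qmap k A).toRingHom ((Mker k A) ^ 2)) := h1
  rw [Ideal.comap_map_of_surjective _ hsurj] at h2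
  exact h2

end Sup

set_option maxHeartbeats 2000000 in
/-- Let `k` be a field and `(A, 𝔪)` a local `k`-algebra whose residue field
`K = A/𝔪` is an algebraic and separable extension of `k`.  Then the `K`-linear map
`ϑ : 𝔪/𝔪² → M̃/M̃²` induced by `a ↦ 1 ⊗ a` is bijective. -/
theorem stmt_11 (k A : Type*) [Field k] [CommRing A] [IsLocalRing A] [Algebra k A]
    [Algebra.IsAlgebraic k (ResidueField A)] [Algebra.IsSeparable k (ResidueField A)]
    (ϑ : (maximalIdeal A).Cotangent →ₗ[ResidueField A] (Mker k A).Cotangent)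
    (hϑ : ∀ m : maximalIdeal A,
      ϑ ((maximalIdeal A).toCotangent m) = (Mker k A).toCotangent (oneTmul k A m)) :
    Function.Bijective ϑ := by
  constructor
  · -- Injectivity, via the section `σ : K → A ⧸ 𝔪²`.
    refine (injective_iff_map_eq_zero ϑ).mpr ?_
    intro z hz
    obtain ⟨m, rfl⟩ := Ideal.toCotangent_surjective (maximalIdeal A) z
    rw [hϑ m] at hz
    have h2 : ((oneTmul k A m : Mker k A) : ResidueField A ⊗[k] A) ∈ (Mker k A) ^ 2 :=
      (Ideal.toCotangent_eq_zero _ _).mp hz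
    obtain ⟨σ, hσ⟩ := exists_section k A
    let π : (ResidueField A ⊗[k] A) →ₐ[k] (A ⧸ (maximalIdeal A ^ 2)) :=
      Algebra.TensorProduct.productMap σ (Ideal.Quotient.mkₐ k (maximalIdeal A ^ 2))
    have hπt : ∀ (lam : ResidueField A) (a : A),
        π (lam ⊗ₜ[k] a) = σ lam * Ideal.Quotient.mk (maximalIdeal A ^ 2) a := fun _ _ => rfl
    have hρπ : ∀ x, rho0 A (π x) = ev k A x := by
      intro x
      induction x with
      | zero => simp
      | tmul lam a => rw [hπt, map_mul, hσ, rho0_mk, ev_tmul]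
      | add x y hx hy => rw [map_add, map_add, hx, hy, ← map_add]
    have hπM : ∀ x ∈ Mker k A, ∃ a ∈ maximalIdeal A,
        π x = Ideal.Quotient.mk (maximalIdeal A ^ 2) a := by
      intro x hx
      obtain ⟨a, ha⟩ := Ideal.Quotient.mk_surjective (I := maximalIdeal A ^ 2) (π x)
      refine ⟨a, ?_, ha.symm⟩
      have h0 : ev k A x = 0 := hx
      have hr := hρπ x
      rw [h0, ← ha, rho0_mk] at hr
      exact Ideal.Quotient.eq_zero_iff_mem.mp hr
    have hπ2 : ∀ x ∈ (Mker k A) ^ 2, π x = 0 := by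
      intro x hx
      rw [pow_two] at hx
      refine Submodule.mul_induction_on hx (fun y hy z hz => ?_)
        (fun y z hy hz => by rw [map_add, hy, hz, add_zero])
      obtain ⟨a, ha, hpa⟩ := hπM y hy
      obtain ⟨b, hb, hpb⟩ := hπM z hz
      rw [map_mul, hpa, hpb, ← map_mul, Ideal.Quotient.eq_zero_iff_mem, pow_two]
      exact Ideal.mul_mem_mul ha hb
    have hfin := hπ2 _ h2
    rw [show ((oneTmul k A m : Mker k A) : ResidueField A ⊗[k] A)
      = (1 : ResidueField A) ⊗ₜ[k] (m : A) from rfl, hπt, map_one, one_mul] at hfin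
    rw [Ideal.toCotangent_eq_zero]
    exact Ideal.Quotient.eq_zero_iff_mem.mp hfin
  · -- Surjectivity
    let f : A →ₗ[k] ResidueField A := (IsScalarTower.toAlgHom k A (ResidueField A)).toLinearMap
    let Msub := (maximalIdeal A).restrictScalars k
    let inc : Msub →ₗ[k] A := Submodule.subtype Msub
    have hql : ∀ x, qmap k A x = LinearMap.lTensor (ResidueField A) f x := by
      intro x
      induction x with
      | zero => rw [map_zero, map_zero]
      | tmul lam a => rfl
      | add x y hx hy => rw [map_add, map_add, hx, hy]
    have hcomp0 : ∀ w, LinearMap.lTensor (ResidueField A) f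
        (LinearMap.lTensor (ResidueField A) inc w) = 0 := by
      intro w
      rw [← LinearMap.comp_apply, ← LinearMap.lTensor_comp]
      have hz : f.comp inc = 0 := by
        refine LinearMap.ext fun a => ?_
        show residue A (a : A) = 0
        exact Ideal.Quotient.eq_zero_iff_mem.mpr a.2
      rw [hz, LinearMap.lTensor_zero, LinearMap.zero_apply]
    have hmemM : ∀ w, LinearMap.lTensor (ResidueField A) inc w ∈ Mker k A := by
      intro w
      apply ker_qmap_le k A
      rw [RingHom.mem_ker, hql]
      exact hcomp0 w
    have hmain : ∀ (w) (h : LinearMap.lTensor (ResidueField A) inc w ∈ Mker k A),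
        (Mker k A).toCotangent ⟨_, h⟩ ∈ LinearMap.range ϑ := by
      intro w
      induction w with
      | zero =>
        intro h
        have hz : (⟨_, h⟩ : Mker k A) = 0 := Subtype.ext (map_zero _)
        rw [hz, map_zero]
        exact Submodule.zero_mem _
      | tmul lam m =>
        intro h
        have hsm : (⟨_, h⟩ : Mker k A) = lam • oneTmul k A ⟨m.1, m.2⟩ := by
          apply Subtype.ext
          show LinearMap.lTensor (ResidueField A) inc (lam ⊗ₜ[k] m)
            = lam • ((1 : ResidueField A) ⊗ₜ[k] (m : A))
          rw [LinearMap.lTensor_tmul, TensorProduct.smul_tmul', smul_eq_mul, mul_one]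
          rfl
        have hsc : (Mker k A).toCotangent (lam • oneTmul k A ⟨m.1, m.2⟩)
            = lam • (Mker k A).toCotangent (oneTmul k A ⟨m.1, m.2⟩) := by
          rw [algebra_compatible_smul (ResidueField A ⊗[k] A) lam
            (oneTmul k A ⟨m.1, m.2⟩), map_smul, algebraMap_smul]
        rw [hsm, hsc, ← hϑ ⟨m.1, m.2⟩]
        exact Submodule.smul_mem _ _ ⟨_, rfl⟩
      | add w₁ w₂ ih₁ ih₂ =>
        intro h
        have hsum : (⟨_, h⟩ : Mker k A)
            = ⟨_, hmemM w₁⟩ + ⟨_, hmemM w₂⟩ := Subtype.ext (map_add _ w₁ w₂)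
        rw [hsum, map_add]
        exact Submodule.add_mem _ (ih₁ _) (ih₂ _)
    intro y
    obtain ⟨⟨x, hx⟩, rfl⟩ := Ideal.toCotangent_surjective (Mker k A) y
    have hsup := Mker_le_sq_sup k A hx
    obtain ⟨u, hu, v, hv, hxadd⟩ := Submodule.mem_sup.mp hsup
    have huM : u ∈ Mker k A := Ideal.pow_le_self two_ne_zero hu
    have hvM : v ∈ Mker k A := ker_qmap_le k A hv
    have hsplit : (⟨x, hx⟩ : Mker k A) = ⟨u, huM⟩ + ⟨v, hvM⟩ :=
      Subtype.ext hxadd.symm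
    rw [hsplit, map_add]
    have h0 : (Mker k A).toCotangent ⟨u, huM⟩ = 0 := (Ideal.toCotangent_eq_zero _ _).mpr hu
    rw [h0, zero_add]
    have hexact : Function.Exact inc f := by
      intro a
      constructor
      · intro ha
        have ha' : a ∈ maximalIdeal A := Ideal.Quotient.eq_zero_iff_mem.mp ha
        exact ⟨⟨a, ha'⟩, rfl⟩
      · rintro ⟨⟨b, hb⟩, rfl⟩
        exact Ideal.Quotient.eq_zero_iff_mem.mpr hb
    have hexactT := Module.Flat.lTensor_exact (ResidueField A) hexact
    have hvz : LinearMap.lTensor (ResidueField A) f v = 0 := by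
      rw [← hql]
      exact hv
    obtain ⟨w, hw⟩ := (hexactT v).mp hvz
    have hve : (⟨v, hvM⟩ : Mker k A) = ⟨_, hmemM w⟩ := Subtype.ext hw.symm
    rw [hve]
    exact hmain w (hmemM w)
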